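/- arXiv:0811.2042 — 2 statements merged into one kernel-verified Lean document; each statement's English description precedes it below -/
import Mathlib

section
/- Let G be a finite simple graph with vertex set V and edge set E, let β be real, and let u, v ∈ V. Then Σ_{σ : V → {−1,+1}} σ_u σ_v exp(β Σ_{ij ∈ E} σ_i σ_j) = 2^{|V|} (cosh β)^{|E|} Σ_{A ∈ S_{u,v}} (tanh β)^{|A|}, where for u ≠ v, S_{u,v} = {A ⊆ E : the set of vertices of odd degree in the spanning subgraph (V,A) is exactly {u,v}}, and S_{v,v} = {A ⊆ E : (V,A) has no vertex of odd degree}. -/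
attribute [local instance] Classical.propDecidable

/-- For an Ising spin configuration `σ : V → {−1,+1}` (encoded as `V → ℤˣ`), the value
`σ_i σ_j` on an (unordered) edge `{i,j}`. -/
def edgeTerm {V : Type*} (σ : V → ℤˣ) : Sym2 V → ℤ :=
  Sym2.lift ⟨fun i j => ((σ i * σ j : ℤˣ) : ℤ), fun i j => by simp [mul_comm]⟩

/-- The degree of the vertex `x` in the spanning subgraph `(V, A)`. -/
noncomputable def subDeg {V : Type*} (A : Finset (Sym2 V)) (x : V) : ℕ :=
  (A.filter fun e => x ∈ e).card

/-- `S_{u,v}`: the subsets `A` of the edge set of `G` whose set of odd-degree vertices in the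
spanning subgraph `(V, A)` is exactly `{u, v}` when `u ≠ v`, and is empty when `u = v`. -/
noncomputable def defectSets {V : Type*} [Fintype V] (G : SimpleGraph V)
    [DecidableRel G.Adj] (u v : V) : Finset (Finset (Sym2 V)) :=
  G.edgeFinset.powerset.filter fun A =>
    ∀ x, (Odd (subDeg A x) ↔ ((x = u ∨ x = v) ∧ u ≠ v))

open Finset in
lemma units_sum_pow (m : ℕ) : ∑ s : ℤˣ, ((s : ℤ) : ℝ) ^ m = if Even m then 2 else 0 := by
  have huniv : (Finset.univ : Finset ℤˣ) = {1, -1} := by decide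
  rw [huniv, Finset.sum_pair (by decide)]
  rcases Nat.even_or_odd m with h | h
  · simp [h.neg_one_pow, h]
    norm_num
  · simp [h.neg_one_pow, h, Nat.not_even_iff_odd.2 h]

open Finset in
lemma spin_sum {V : Type*} [Fintype V] [DecidableEq V] (u v : V)
    (A : Finset (Sym2 V)) (hA : ∀ e ∈ A, ¬ e.IsDiag) :
    ∑ σ : V → ℤˣ, ((σ u * σ v : ℤˣ) : ℝ) * ∏ e ∈ A, (edgeTerm σ e : ℝ)
      = if (∀ x, (Odd (subDeg A x) ↔ ((x = u ∨ x = v) ∧ u ≠ v)))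
          then (2 : ℝ) ^ Fintype.card V else 0 := by
  classical
  set n : V → ℕ := fun x => subDeg A x + (if x = u then 1 else 0) + (if x = v then 1 else 0)
    with hn
  have factor : ∀ σ : V → ℤˣ,
      ((σ u * σ v : ℤˣ) : ℝ) * ∏ e ∈ A, (edgeTerm σ e : ℝ)
        = ∏ x : V, ((σ x : ℤ) : ℝ) ^ n x := by
    intro σ
    have h1 : ∀ e ∈ A, (edgeTerm σ e : ℝ)
        = ∏ x : V, (if x ∈ e then ((σ x : ℤ) : ℝ) else 1) := by
      intro e he
      induction e using Sym2.ind with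
      | _ i j =>
        have hij : i ≠ j := by simpa [Sym2.mk_isDiag_iff] using hA _ he
        rw [← Finset.prod_filter]
        have hfil : Finset.univ.filter (fun x => x ∈ s(i,j)) = {i, j} := by
          ext x; simp [Sym2.mem_iff]
        rw [hfil, Finset.prod_pair hij]
        simp [edgeTerm]
    rw [Finset.prod_congr rfl h1, Finset.prod_comm]
    have h2 : ∀ x : V, ∏ e ∈ A, (if x ∈ e then ((σ x : ℤ) : ℝ) else 1)
        = ((σ x : ℤ) : ℝ) ^ subDeg A x := by
      intro x
      rw [← Finset.prod_filter, Finset.prod_const]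
      simp only [subDeg]
      congr!
    rw [Finset.prod_congr rfl fun x _ => h2 x]
    have h3 : ((σ u * σ v : ℤˣ) : ℝ) =
        (∏ x : V, ((σ x : ℤ) : ℝ) ^ (if x = u then 1 else 0)) *
        ∏ x : V, ((σ x : ℤ) : ℝ) ^ (if x = v then 1 else 0) := by
      simp only [pow_ite, pow_one, pow_zero, Finset.prod_ite_eq', Finset.mem_univ, if_true]
      push_cast
      ring
    rw [h3, mul_assoc, ← Finset.prod_mul_distrib, ← Finset.prod_mul_distrib]
    refine Finset.prod_congr rfl fun x _ => ?_
    rw [hn]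
    rw [← pow_add, ← pow_add]
    ring_nf
  simp_rw [factor]
  rw [← Fintype.prod_sum fun (x : V) (s : ℤˣ) => ((s : ℤ) : ℝ) ^ n x]
  have hcond : (∀ x, (Odd (subDeg A x) ↔ ((x = u ∨ x = v) ∧ u ≠ v))) ↔ ∀ x, Even (n x) := by
    refine forall_congr' fun x => ?_
    rw [hn]
    rcases eq_or_ne u v with rfl | huv
    · by_cases hxu : x = u <;> simp [hxu, Nat.even_iff, Nat.odd_iff] <;> omega
    · by_cases hxu : x = u <;> by_cases hxv : x = v <;>
        simp [hxu, hxv, huv, huv.symm, Nat.even_iff, Nat.odd_iff] <;> omega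
  rw [if_congr hcond rfl rfl]
  split_ifs with hall
  · calc ∏ x : V, ∑ s : ℤˣ, ((s : ℤ) : ℝ) ^ n x
        = ∏ _x : V, (2 : ℝ) :=
          Finset.prod_congr rfl fun x _ => by rw [units_sum_pow, if_pos (hall x)]
      _ = 2 ^ Fintype.card V := by simp
  · push_neg at hall
    obtain ⟨x, hx⟩ := hall
    exact Finset.prod_eq_zero (Finset.mem_univ x) (by rw [units_sum_pow, if_neg hx])

/-- High-temperature expansion of the Ising two-point function:
`Σ_σ σ_u σ_v exp(β Σ_{ij∈E} σ_i σ_j) = 2^|V| (cosh β)^|E| Σ_{A ∈ S_{u,v}} (tanh β)^|A|`. -/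
theorem ising_two_point_expansion {V : Type*} [Fintype V] [DecidableEq V]
    (G : SimpleGraph V) [DecidableRel G.Adj] (β : ℝ) (u v : V) :
    ∑ σ : V → ℤˣ,
        ((σ u * σ v : ℤˣ) : ℝ) * Real.exp (β * ∑ e ∈ G.edgeFinset, (edgeTerm σ e : ℝ)) =
      2 ^ Fintype.card V * Real.cosh β ^ G.edgeFinset.card *
        ∑ A ∈ defectSets G u v, Real.tanh β ^ A.card := by
  classical
  have hterm : ∀ (σ : V → ℤˣ) e, (edgeTerm σ e : ℝ) = 1 ∨ (edgeTerm σ e : ℝ) = -1 := by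
    intro σ e
    induction e using Sym2.ind with
    | _ i j =>
      rcases Int.units_eq_one_or (σ i * σ j) with h | h
      · left
        simp only [edgeTerm, Sym2.lift_mk, h, Units.val_one, Int.cast_one]
      · right
        simp only [edgeTerm, Sym2.lift_mk, h, Units.val_neg, Units.val_one,
          Int.cast_neg, Int.cast_one]
  have hexp : ∀ t : ℝ, (t = 1 ∨ t = -1) →
      Real.exp (β * t) = t * Real.sinh β + Real.cosh β := by
    rintro t (rfl | rfl)
    · rw [mul_one, one_mul, add_comm, Real.cosh_add_sinh]
    · rw [mul_neg_one, neg_one_mul, ← sub_eq_neg_add, ← Real.cosh_sub_sinh]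
  have key : ∀ σ : V → ℤˣ,
      Real.exp (β * ∑ e ∈ G.edgeFinset, (edgeTerm σ e : ℝ))
        = ∑ A ∈ G.edgeFinset.powerset,
            (∏ e ∈ A, (edgeTerm σ e : ℝ)) *
              (Real.sinh β ^ A.card * Real.cosh β ^ (G.edgeFinset \ A).card) := by
    intro σ
    rw [Finset.mul_sum, Real.exp_sum,
        Finset.prod_congr rfl fun e _ => hexp _ (hterm σ e), Finset.prod_add]
    refine Finset.sum_congr rfl fun A hA => ?_
    rw [Finset.prod_mul_distrib, Finset.prod_const, Finset.prod_const]
    ring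
  simp_rw [key, Finset.mul_sum]
  rw [Finset.sum_comm]
  have step : ∀ A ∈ G.edgeFinset.powerset,
      ∑ σ : V → ℤˣ, ((σ u * σ v : ℤˣ) : ℝ) *
          ((∏ e ∈ A, (edgeTerm σ e : ℝ)) *
            (Real.sinh β ^ A.card * Real.cosh β ^ (G.edgeFinset \ A).card))
        = ((if (∀ x, (Odd (subDeg A x) ↔ ((x = u ∨ x = v) ∧ u ≠ v)))
              then (2 : ℝ) ^ Fintype.card V else 0)) *
            (Real.sinh β ^ A.card * Real.cosh β ^ (G.edgeFinset \ A).card) := by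
    intro A hA
    rw [← spin_sum u v A (fun e he => by
      have : e ∈ G.edgeFinset := Finset.mem_powerset.1 hA he
      exact G.not_isDiag_of_mem_edgeSet (SimpleGraph.mem_edgeFinset.1 this)),
      Finset.sum_mul]
    exact Finset.sum_congr rfl fun σ _ => by ring
  rw [Finset.sum_congr rfl step, defectSets, Finset.sum_filter]
  refine Finset.sum_congr rfl fun A hA => ?_
  have hAsub : A ⊆ G.edgeFinset := Finset.mem_powerset.1 hA
  have hcard : (G.edgeFinset \ A).card = G.edgeFinset.card - A.card :=
    Finset.card_sdiff_of_subset hAsub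
  have hle : A.card ≤ G.edgeFinset.card := Finset.card_le_card hAsub
  have hcosh : Real.cosh β ≠ 0 := (Real.cosh_pos β).ne'
  have htanh : Real.tanh β ^ A.card * Real.cosh β ^ A.card = Real.sinh β ^ A.card := by
    rw [← mul_pow, Real.tanh_eq_sinh_div_cosh, div_mul_cancel₀ _ hcosh]
  have hw : (2 : ℝ) ^ Fintype.card V *
        (Real.sinh β ^ A.card * Real.cosh β ^ (G.edgeFinset \ A).card)
      = 2 ^ Fintype.card V * Real.cosh β ^ G.edgeFinset.card * Real.tanh β ^ A.card := by
    calc (2 : ℝ) ^ Fintype.card V *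
          (Real.sinh β ^ A.card * Real.cosh β ^ (G.edgeFinset \ A).card)
        = 2 ^ Fintype.card V *
          ((Real.tanh β ^ A.card * Real.cosh β ^ A.card) *
            Real.cosh β ^ (G.edgeFinset.card - A.card)) := by rw [htanh, hcard]
      _ = 2 ^ Fintype.card V * Real.cosh β ^ G.edgeFinset.card * Real.tanh β ^ A.card := by
          rw [mul_assoc, ← pow_add, Nat.add_sub_cancel' hle]
          ring
  split_ifs with h
  · exact hw
  · simp
end

section
/- Let G be a k-regular finite simple graph with vertex set V and edge set E, let β > 0, and set w = tanh β. Then the π_w-probability that the two defects coincide equals |V| divided by the Ising mean-square magnetization: [Σ_{v ∈ V} Σ_{A ∈ S_{v,v}} w^{|A|}] / [Σ_{u,v ∈ V} Σ_{A ∈ S_{u,v}} w^{|A|}] = |V| · [Σ_{σ : V → {−1,+1}} e^{β Σ_{ij∈E} σ_i σ_j}] / [Σ_{σ : V → {−1,+1}} (Σ_{x ∈ V} σ_x)^2 e^{β Σ_{ij∈E} σ_i σ_j}]. -/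
attribute [local instance] Classical.propDecidable

section Aux
set_option linter.unusedSectionVars false
variable {V : Type*} [Fintype V] [DecidableEq V]

lemma subDeg_insert (A : Finset (Sym2 V)) (e : Sym2 V) (he : e ∉ A) (x : V) :
    subDeg (insert e A) x = subDeg A x + (if x ∈ e then 1 else 0) := by
  unfold subDeg
  rw [Finset.card_filter, Finset.card_filter, Finset.sum_insert he, add_comm]
  simp

lemma prod_pow_mem (σ : V → ℤˣ) (e : Sym2 V) (hd : ¬ e.IsDiag) :
    (∏ x : V, ((σ x : ℤ) : ℝ) ^ (if x ∈ e then 1 else 0)) = ((edgeTerm σ e : ℤ) : ℝ) := by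
  induction e using Sym2.ind with
  | _ i j =>
    rw [Sym2.mk_isDiag_iff] at hd
    have : ∀ x : V, (((σ x : ℤ) : ℝ) ^ (if x ∈ s(i,j) then 1 else 0))
        = if x ∈ ({i, j} : Finset V) then ((σ x : ℤ) : ℝ) else 1 := by
      intro x; by_cases h : x ∈ s(i,j) <;> simp_all [Sym2.mem_iff]
    rw [Finset.prod_congr rfl (fun x _ => this x), Finset.prod_ite_mem,
      Finset.univ_inter, Finset.prod_pair hd]
    simp [edgeTerm]

lemma prod_edgeTerm (σ : V → ℤˣ) (A : Finset (Sym2 V)) (hA : ∀ e ∈ A, ¬ e.IsDiag) :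
    (∏ e ∈ A, ((edgeTerm σ e : ℤ) : ℝ)) = ∏ x : V, ((σ x : ℤ) : ℝ) ^ subDeg A x := by
  induction A using Finset.induction_on with
  | empty => simp [subDeg]
  | insert e A he ih =>
    rw [Finset.prod_insert he, ih (fun e' he' => hA e' (Finset.mem_insert_of_mem he')),
      ← prod_pow_mem σ e (hA e (Finset.mem_insert_self e A)), ← Finset.prod_mul_distrib]
    exact Finset.prod_congr rfl fun x _ => by rw [subDeg_insert A e he, pow_add, mul_comm]

lemma units_int_univ : (Finset.univ : Finset ℤˣ) = {1, -1} := by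
  ext u; rcases Int.units_eq_one_or u with rfl | rfl <;> simp

lemma sum_units_pow (n : ℕ) : (∑ s : ℤˣ, ((s : ℤ) : ℝ) ^ n) = if Even n then 2 else 0 := by
  rw [units_int_univ, Finset.sum_pair (by decide : (1 : ℤˣ) ≠ -1)]
  rcases Nat.even_or_odd n with h | h
  · simp [h, h.neg_one_pow]; norm_num
  · simp [h, h.neg_one_pow, Nat.not_even_iff_odd.mpr h]

lemma sum_sigma_prod (n : V → ℕ) :
    (∑ σ : V → ℤˣ, ∏ x : V, ((σ x : ℤ) : ℝ) ^ n x)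
      = if (∀ x, Even (n x)) then 2 ^ Fintype.card V else 0 := by
  rw [← Fintype.prod_sum (f := fun x (s : ℤˣ) => ((s : ℤ) : ℝ) ^ n x)]
  by_cases h : ∀ x, Even (n x)
  · rw [if_pos h]
    rw [Finset.prod_congr rfl (fun x _ => by rw [sum_units_pow, if_pos (h x)]),
      Finset.prod_const, Finset.card_univ]
  · rw [if_neg h]
    push_neg at h
    obtain ⟨x, hx⟩ := h
    exact Finset.prod_eq_zero (Finset.mem_univ x) (by rw [sum_units_pow, if_neg hx])

lemma exp_factor (β : ℝ) {t : ℤ} (ht : t = 1 ∨ t = -1) :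
    Real.exp (β * (t : ℝ)) = Real.cosh β * (1 + Real.tanh β * (t : ℝ)) := by
  have hc := Real.cosh_pos β
  rcases ht with rfl | rfl
  · rw [Real.tanh_eq_sinh_div_cosh]
    push_cast
    field_simp
    rw [Real.cosh_add_sinh]
  · rw [Real.tanh_eq_sinh_div_cosh]
    push_cast
    field_simp
    rw [← Real.cosh_sub_sinh]; ring

lemma edgeTerm_eq_or (σ : V → ℤˣ) (e : Sym2 V) : edgeTerm σ e = 1 ∨ edgeTerm σ e = -1 := by
  induction e using Sym2.ind with
  | _ i j =>
    have := Int.units_eq_one_or (σ i * σ j)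
    rcases this with h | h <;> [left; right] <;>
      simp only [edgeTerm, Sym2.lift_mk, h] <;> simp

lemma prod_single (σ : V → ℤˣ) (u : V) :
    (∏ x : V, ((σ x : ℤ) : ℝ) ^ (if x = u then 1 else 0)) = ((σ u : ℤ) : ℝ) := by
  have : ∀ x : V, (((σ x : ℤ) : ℝ) ^ (if x = u then 1 else 0))
      = if x = u then ((σ x : ℤ) : ℝ) else 1 := by
    intro x; by_cases h : x = u <;> simp [h]
  rw [Finset.prod_congr rfl (fun x _ => this x), Finset.prod_ite_eq' Finset.univ u]
  simp

lemma key_identity (G : SimpleGraph V) [DecidableRel G.Adj] (β : ℝ) (u v : V) :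
    (∑ σ : V → ℤˣ, (((σ u : ℤ) : ℝ) * ((σ v : ℤ) : ℝ)) *
        Real.exp (β * ∑ e ∈ G.edgeFinset, ((edgeTerm σ e : ℤ) : ℝ))) =
      Real.cosh β ^ G.edgeFinset.card * 2 ^ Fintype.card V *
        ∑ A ∈ defectSets G u v, Real.tanh β ^ A.card := by
  set w := Real.tanh β with hw
  have hexp : ∀ σ : V → ℤˣ,
      Real.exp (β * ∑ e ∈ G.edgeFinset, ((edgeTerm σ e : ℤ) : ℝ))
        = Real.cosh β ^ G.edgeFinset.card *
          ∑ A ∈ G.edgeFinset.powerset, w ^ A.card * ∏ e ∈ A, ((edgeTerm σ e : ℤ) : ℝ) := by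
    intro σ
    rw [Finset.mul_sum, Real.exp_sum,
      Finset.prod_congr rfl (fun e _ => exp_factor β (edgeTerm_eq_or σ e)),
      Finset.prod_mul_distrib, Finset.prod_const]
    congr 1
    have : ∀ e ∈ G.edgeFinset, (1 + w * ((edgeTerm σ e : ℤ) : ℝ))
        = (w * ((edgeTerm σ e : ℤ) : ℝ)) + 1 := fun e _ => add_comm _ _
    rw [Finset.prod_congr rfl this, Finset.prod_add]
    refine Finset.sum_congr rfl fun A hA => ?_
    rw [Finset.prod_mul_distrib, Finset.prod_const, Finset.prod_const_one, mul_one]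
  calc (∑ σ : V → ℤˣ, (((σ u : ℤ) : ℝ) * ((σ v : ℤ) : ℝ)) *
        Real.exp (β * ∑ e ∈ G.edgeFinset, ((edgeTerm σ e : ℤ) : ℝ)))
      = Real.cosh β ^ G.edgeFinset.card * ∑ A ∈ G.edgeFinset.powerset,
          w ^ A.card * ∑ σ : V → ℤˣ,
            (((σ u : ℤ) : ℝ) * ((σ v : ℤ) : ℝ)) * ∏ e ∈ A, ((edgeTerm σ e : ℤ) : ℝ) := by
        rw [Finset.sum_congr rfl (fun σ _ => by
          rw [hexp σ, Finset.mul_sum, Finset.mul_sum]), Finset.sum_comm]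
        conv_rhs => rw [Finset.mul_sum]
        refine Finset.sum_congr rfl fun A hA => ?_
        rw [Finset.mul_sum, Finset.mul_sum]
        exact Finset.sum_congr rfl fun σ _ => by ring
    _ = Real.cosh β ^ G.edgeFinset.card * ∑ A ∈ G.edgeFinset.powerset,
          w ^ A.card * (if (∀ x, Even (subDeg A x
              + ((if x = u then 1 else 0) + (if x = v then 1 else 0))))
            then (2 : ℝ) ^ Fintype.card V else 0) := by
        refine congrArg _ (Finset.sum_congr rfl fun A hA => congrArg _ ?_)
        have hnd : ∀ e ∈ A, ¬ e.IsDiag := fun e he =>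
          G.not_isDiag_of_mem_edgeSet (SimpleGraph.mem_edgeFinset.mp
            (Finset.mem_powerset.mp hA he))
        rw [← sum_sigma_prod]
        refine Finset.sum_congr rfl fun σ _ => ?_
        rw [prod_edgeTerm σ A hnd, ← prod_single σ u, ← prod_single σ v,
          ← Finset.prod_mul_distrib, ← Finset.prod_mul_distrib]
        refine Finset.prod_congr rfl fun x _ => ?_
        rw [← pow_add, ← pow_add]
        congr 1
        omega
    _ = Real.cosh β ^ G.edgeFinset.card * (2 ^ Fintype.card V *
          ∑ A ∈ defectSets G u v, w ^ A.card) := by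
        congr 1
        rw [defectSets, Finset.sum_filter, Finset.mul_sum]
        refine Finset.sum_congr rfl fun A hA => ?_
        have hiff : (∀ x, Even (subDeg A x
              + ((if x = u then 1 else 0) + (if x = v then 1 else 0))))
            ↔ (∀ x, (Odd (subDeg A x) ↔ ((x = u ∨ x = v) ∧ u ≠ v))) := by
          refine forall_congr' fun x => ?_
          rcases eq_or_ne u v with huv | huv
          · subst huv
            by_cases hxu : x = u
            · subst hxu; simp [Nat.even_iff, Nat.odd_iff] <;> omega
            · simp [hxu, Nat.even_iff, Nat.odd_iff] <;> omega
          · by_cases hxu : x = u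
            · subst hxu
              simp [huv, huv.symm, (show x ≠ v from huv), Nat.even_iff, Nat.odd_iff] <;> omega
            · by_cases hxv : x = v
              · subst hxv
                simp [hxu, huv, Nat.even_iff, Nat.odd_iff] <;> omega
              · simp [hxu, hxv, huv, Nat.even_iff, Nat.odd_iff] <;> omega
        by_cases h : ∀ x, (Odd (subDeg A x) ↔ ((x = u ∨ x = v) ∧ u ≠ v))
        · rw [if_pos h, if_pos (hiff.mpr h)]; ring
        · rw [if_neg h, if_neg (fun hc => h (hiff.mp hc)), mul_zero, mul_zero]
    _ = Real.cosh β ^ G.edgeFinset.card * 2 ^ Fintype.card V *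
          ∑ A ∈ defectSets G u v, w ^ A.card := by ring


end Aux

/-- For a `k`-regular finite connected simple graph and `w = tanh β` with `β > 0`, the
`π_w`-probability that the two defects of the worm chain coincide equals `|V|` divided by
the Ising mean-square magnetization. -/
theorem worm_defect_coincidence_probability {V : Type*} [Fintype V] [DecidableEq V]
    (G : SimpleGraph V) [DecidableRel G.Adj] (hconn : G.Connected)
    (k : ℕ) (hreg : ∀ v, G.degree v = k) (β : ℝ) (hβ : 0 < β) :
    (∑ v : V, ∑ A ∈ defectSets G v v, Real.tanh β ^ A.card) /
        (∑ u : V, ∑ v : V, ∑ A ∈ defectSets G u v, Real.tanh β ^ A.card) =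
      (Fintype.card V : ℝ) *
        (∑ σ : V → ℤˣ, Real.exp (β * ∑ e ∈ G.edgeFinset, (edgeTerm σ e : ℝ))) /
        (∑ σ : V → ℤˣ, (∑ x : V, ((σ x : ℤ) : ℝ)) ^ 2 *
          Real.exp (β * ∑ e ∈ G.edgeFinset, (edgeTerm σ e : ℝ))) := by
  obtain ⟨v₀⟩ := hconn.nonempty
  set w := Real.tanh β with hw
  set C := Real.cosh β ^ G.edgeFinset.card * (2 : ℝ) ^ Fintype.card V with hC
  have hCpos : 0 < C := mul_pos (pow_pos (Real.cosh_pos β) _) (pow_pos two_pos _)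
  have hdiag : ∀ a b : V, defectSets G a a = defectSets G b b := by
    intro a b
    ext A
    simp [defectSets]
  have hN : (∑ σ : V → ℤˣ, Real.exp (β * ∑ e ∈ G.edgeFinset, (edgeTerm σ e : ℝ)))
      = C * ∑ A ∈ defectSets G v₀ v₀, w ^ A.card := by
    rw [← key_identity G β v₀ v₀]
    refine Finset.sum_congr rfl fun σ _ => ?_
    have h1 : (((σ v₀ : ℤ) : ℝ) * ((σ v₀ : ℤ) : ℝ)) = 1 := by
      rcases Int.units_eq_one_or (σ v₀) with h | h <;> rw [h] <;> norm_num
    rw [h1, one_mul]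
  have hD : (∑ σ : V → ℤˣ, (∑ x : V, ((σ x : ℤ) : ℝ)) ^ 2 *
        Real.exp (β * ∑ e ∈ G.edgeFinset, (edgeTerm σ e : ℝ)))
      = C * ∑ u : V, ∑ v : V, ∑ A ∈ defectSets G u v, w ^ A.card := by
    calc (∑ σ : V → ℤˣ, (∑ x : V, ((σ x : ℤ) : ℝ)) ^ 2 *
          Real.exp (β * ∑ e ∈ G.edgeFinset, (edgeTerm σ e : ℝ)))
        = ∑ σ : V → ℤˣ, ∑ u : V, ∑ v : V, (((σ u : ℤ) : ℝ) * ((σ v : ℤ) : ℝ)) *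
            Real.exp (β * ∑ e ∈ G.edgeFinset, (edgeTerm σ e : ℝ)) := by
          refine Finset.sum_congr rfl fun σ _ => ?_
          rw [sq, Finset.sum_mul_sum, Finset.sum_mul]
          exact Finset.sum_congr rfl fun u _ => by rw [Finset.sum_mul]
      _ = ∑ u : V, ∑ v : V, ∑ σ : V → ℤˣ, (((σ u : ℤ) : ℝ) * ((σ v : ℤ) : ℝ)) *
            Real.exp (β * ∑ e ∈ G.edgeFinset, (edgeTerm σ e : ℝ)) := by
          rw [Finset.sum_comm]
          exact Finset.sum_congr rfl fun u _ => Finset.sum_comm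
      _ = ∑ u : V, ∑ v : V, C * ∑ A ∈ defectSets G u v, w ^ A.card := by
          exact Finset.sum_congr rfl fun u _ => Finset.sum_congr rfl fun v _ =>
            key_identity G β u v
      _ = C * ∑ u : V, ∑ v : V, ∑ A ∈ defectSets G u v, w ^ A.card := by
          rw [Finset.mul_sum]
          exact Finset.sum_congr rfl fun u _ => (Finset.mul_sum _ _ _).symm
  have hNum : (∑ v : V, ∑ A ∈ defectSets G v v, w ^ A.card)
      = (Fintype.card V : ℝ) * ∑ A ∈ defectSets G v₀ v₀, w ^ A.card := by
    rw [Finset.sum_congr rfl (fun a _ => by rw [hdiag a v₀]), Finset.sum_const,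
      Finset.card_univ, nsmul_eq_mul]
  rw [hN, hD, hNum, mul_div_assoc, mul_div_assoc,
    mul_div_mul_left _ _ (ne_of_gt hCpos)]
end
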